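/- For any constant c > 0, the function f(x) = (1 - Φ(x)) / (1 - Φ(x - c)) is non-increasing in x, where Φ is the standard normal CDF. -/

import Mathlib

noncomputable def stdGaussianPDF (t : ℝ) : ℝ := Real.exp (-(t ^ 2) / 2) / Real.sqrt (2 * Real.pi)

noncomputable def stdGaussianCDF (x : ℝ) : ℝ := ∫ t in Set.Iic x, stdGaussianPDF t

open Real MeasureTheory Set Filter

lemma pdf_pos (t : ℝ) : 0 < stdGaussianPDF t :=
  div_pos (exp_pos _) (Real.sqrt_pos.2 (by positivity))

lemma pdf_cont : Continuous stdGaussianPDF := by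
  unfold stdGaussianPDF; fun_prop

lemma pdf_eq : stdGaussianPDF = fun t => Real.exp (-(1/2) * t ^ 2) / Real.sqrt (2 * Real.pi) := by
  funext t; unfold stdGaussianPDF; ring_nf

lemma pdf_integrable : Integrable stdGaussianPDF := by
  rw [pdf_eq]
  exact (integrable_exp_neg_mul_sq (by norm_num)).div_const _

lemma integral_pdf : ∫ t, stdGaussianPDF t = 1 := by
  rw [pdf_eq]
  rw [integral_div, integral_gaussian]
  rw [show Real.pi / (1/2) = 2 * Real.pi by ring]
  exact div_self (by positivity)

noncomputable def gaussS (x : ℝ) : ℝ := ∫ t in Set.Ioi x, stdGaussianPDF t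

lemma S_eq (x : ℝ) : 1 - stdGaussianCDF x = gaussS x := by
  have h := intervalIntegral.integral_Iic_add_Ioi (b := x) pdf_integrable.integrableOn pdf_integrable.integrableOn
  rw [integral_pdf] at h
  unfold stdGaussianCDF gaussS
  linarith

lemma S_pos (x : ℝ) : 0 < gaussS x := by
  refine (setIntegral_pos_iff_support_of_nonneg_ae ?_ pdf_integrable.integrableOn).2 ?_
  · exact ae_of_all _ fun t => (pdf_pos t).le
  · have hsub : Set.Ioi x ⊆ Function.support stdGaussianPDF ∩ Set.Ioi x :=
      fun t ht => ⟨(pdf_pos t).ne', ht⟩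
    refine lt_of_lt_of_le ?_ (measure_mono hsub)
    simp [Real.volume_Ioi]

lemma cdf_hasDerivAt (x : ℝ) : HasDerivAt stdGaussianCDF (stdGaussianPDF x) x := by
  have key : stdGaussianCDF = fun y => stdGaussianCDF 0 + ∫ t in (0:ℝ)..y, stdGaussianPDF t := by
    funext y
    have h := intervalIntegral.integral_Iic_sub_Iic (a := 0) (b := y)
      pdf_integrable.integrableOn pdf_integrable.integrableOn
    unfold stdGaussianCDF
    linarith
  have h : HasDerivAt (fun y => ∫ t in (0:ℝ)..y, stdGaussianPDF t) (stdGaussianPDF x) x :=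
    intervalIntegral.integral_hasDerivAt_right pdf_integrable.intervalIntegrable
      (pdf_cont.stronglyMeasurableAtFilter _ _) pdf_cont.continuousAt
  rw [key]
  exact h.const_add _

lemma S_hasDerivAt (x : ℝ) : HasDerivAt gaussS (-(stdGaussianPDF x)) x := by
  have key : gaussS = fun y => 1 - stdGaussianCDF y := funext fun y => (S_eq y).symm
  rw [key]
  simpa using (cdf_hasDerivAt x).const_sub 1

lemma pdf_hasDerivAt (x : ℝ) : HasDerivAt stdGaussianPDF (-x * stdGaussianPDF x) x := by
  have h1 : HasDerivAt (fun t : ℝ => -(t ^ 2) / 2) (-x) x := by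
    have := ((hasDerivAt_pow 2 x).neg).div_const 2
    simpa using this.congr_deriv (by ring)
  have h2 := (h1.exp).div_const (Real.sqrt (2 * Real.pi))
  have : stdGaussianPDF = fun t => Real.exp (-(t ^ 2) / 2) / Real.sqrt (2 * Real.pi) := rfl
  rw [this]
  refine h2.congr_deriv ?_
  show _ = -x * (Real.exp (-(x ^ 2) / 2) / Real.sqrt (2 * Real.pi))
  field_simp

lemma pdf_tendsto : Tendsto (fun t => -stdGaussianPDF t) atTop (nhds 0) := by
  have h1 : Tendsto (fun t : ℝ => -(t ^ 2) / 2) atTop atBot := by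
    apply Filter.Tendsto.atBot_div_const (by norm_num : (0:ℝ) < 2)
    exact tendsto_neg_atTop_atBot.comp (tendsto_pow_atTop two_ne_zero)
  have h2 : Tendsto stdGaussianPDF atTop (nhds 0) := by
    have := (Real.tendsto_exp_atBot.comp h1).div_const (Real.sqrt (2 * Real.pi))
    rw [show stdGaussianPDF = fun t => Real.exp (-(t ^ 2) / 2) / Real.sqrt (2 * Real.pi) from rfl]
    simpa [Function.comp, neg_div] using this
  simpa using h2.neg

lemma tail_deriv (t : ℝ) : HasDerivAt (fun t => -stdGaussianPDF t) (t * stdGaussianPDF t) t := by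
  exact (pdf_hasDerivAt t).neg.congr_deriv (by ring)

lemma tail_integrable {x : ℝ} (hx : 0 ≤ x) :
    IntegrableOn (fun t => t * stdGaussianPDF t) (Set.Ioi x) := by
  refine integrableOn_Ioi_deriv_of_nonneg' (fun t _ => tail_deriv t) (fun t ht => ?_) pdf_tendsto
  exact mul_nonneg (le_trans hx (le_of_lt ht)) (pdf_pos t).le

lemma tail_first_moment {x : ℝ} (hx : 0 ≤ x) :
    ∫ t in Set.Ioi x, t * stdGaussianPDF t = stdGaussianPDF x := by
  have h := integral_Ioi_of_hasDerivAt_of_nonneg' (fun t _ => tail_deriv t)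
    (fun t ht => mul_nonneg (le_trans hx (le_of_lt ht)) (pdf_pos t).le) pdf_tendsto
  simpa using h

lemma mills_key (x : ℝ) : x * gaussS x ≤ stdGaussianPDF x := by
  rcases le_or_gt x 0 with hx | hx
  · exact le_trans (mul_nonpos_of_nonpos_of_nonneg hx (S_pos x).le) (pdf_pos x).le
  · have h1 : x * gaussS x = ∫ t in Set.Ioi x, x * stdGaussianPDF t := by
      rw [integral_const_mul]; rfl
    have h2 : (∫ t in Set.Ioi x, x * stdGaussianPDF t) ≤ ∫ t in Set.Ioi x, t * stdGaussianPDF t := by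
      refine setIntegral_mono_on (pdf_integrable.integrableOn.const_mul x)
        (tail_integrable hx.le) measurableSet_Ioi (fun t ht => ?_)
      exact mul_le_mul_of_nonneg_right (le_of_lt ht) (pdf_pos t).le
    rw [h1]
    calc (∫ t in Set.Ioi x, x * stdGaussianPDF t) ≤ ∫ t in Set.Ioi x, t * stdGaussianPDF t := h2
    _ = stdGaussianPDF x := tail_first_moment hx.le

noncomputable def mills (x : ℝ) : ℝ := gaussS x / stdGaussianPDF x

lemma mills_hasDerivAt (x : ℝ) : HasDerivAt mills (x * mills x - 1) x := by
  have h := (S_hasDerivAt x).div (pdf_hasDerivAt x) (pdf_pos x).ne'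
  have : mills = fun y => gaussS y / stdGaussianPDF y := rfl
  rw [this]
  refine h.congr_deriv ?_
  show _ = x * (gaussS x / stdGaussianPDF x) - 1
  have hp := (pdf_pos x).ne'
  field_simp
  ring

lemma mills_antitone : Antitone mills := by
  refine antitone_of_deriv_nonpos (fun x => (mills_hasDerivAt x).differentiableAt) fun x => ?_
  rw [(mills_hasDerivAt x).deriv]
  have hk := mills_key x
  have hp := pdf_pos x
  have : x * mills x ≤ 1 := by
    unfold mills
    rw [← mul_div_assoc, div_le_one hp]
    exact hk
  linarith

theorem stmt_2 (c : ℝ) (hc : 0 < c) :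
    Antitone (fun x : ℝ => (1 - stdGaussianCDF x) / (1 - stdGaussianCDF (x - c))) := by
  have hfun : (fun x : ℝ => (1 - stdGaussianCDF x) / (1 - stdGaussianCDF (x - c)))
      = fun x => gaussS x / gaussS (x - c) := by
    funext x; rw [S_eq, S_eq]
  rw [hfun]
  have hder : ∀ x : ℝ, HasDerivAt (fun x => gaussS x / gaussS (x - c))
      ((-(stdGaussianPDF x) * gaussS (x - c) - gaussS x * (-(stdGaussianPDF (x - c)) * 1)) /
        (gaussS (x - c)) ^ 2) x := by
    intro x
    have hden : HasDerivAt (fun x : ℝ => gaussS (x - c)) (-(stdGaussianPDF (x - c)) * 1) x :=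
      ((S_hasDerivAt (x - c)).comp_sub_const x c).congr_deriv (mul_one _).symm
    exact (S_hasDerivAt x).div hden (S_pos (x - c)).ne'
  refine antitone_of_deriv_nonpos (fun x => (hder x).differentiableAt) fun x => ?_
  rw [(hder x).deriv]
  apply div_nonpos_of_nonpos_of_nonneg _ (sq_nonneg _)
  have hm : mills x ≤ mills (x - c) := mills_antitone (by linarith : x - c ≤ x)
  have h2 : gaussS x * stdGaussianPDF (x - c) ≤ gaussS (x - c) * stdGaussianPDF x := by
    have := (div_le_div_iff₀ (pdf_pos x) (pdf_pos (x - c))).1 hm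
    linarith
  nlinarith [pdf_pos x, pdf_pos (x - c), S_pos x, S_pos (x - c)]
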